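/- The truncated Frobenius function Y ↦ sqrt(Σ_{i=1}^r σᵢ(Y)²) (sum over the r largest singular values) is a norm on real n×m matrices. -/

import Mathlib

open Matrix BigOperators Finset

/-- Singular values of a real `n × m` matrix, in nonincreasing order, 0-indexed:
`sv M 0 ≥ sv M 1 ≥ …` are the singular values (square roots of the eigenvalues of `Mᵀ M`). -/
noncomputable def sv {n m : ℕ} (M : Matrix (Fin n) (Fin m) ℝ) (i : ℕ) : ℝ :=
  (((List.ofFn fun j : Fin m =>
      Real.sqrt (((by rw [← Matrix.conjTranspose_eq_transpose_of_trivial]; exact Matrix.isHermitian_conjTranspose_mul_self M : (Mᵀ * M).IsHermitian)).eigenvalues j)).mergeSort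
      (fun a b => decide (a ≥ b))).getD i 0)

/-- Trace inner product `⟨M, Y⟩ = tr (Mᵀ Y)`. -/
def ip {n m : ℕ} (M Y : Matrix (Fin n) (Fin m) ℝ) : ℝ := ∑ i, ∑ j, M i j * Y i j

/-- Frobenius norm. -/
noncomputable def fro {n m : ℕ} (M : Matrix (Fin n) (Fin m) ℝ) : ℝ :=
  Real.sqrt (∑ i, ∑ j, M i j ^ 2)

/-- Truncated Frobenius norm `‖M‖_{F,r} = sqrt (σ₁² + ⋯ + σᵣ²)`. -/
noncomputable def truncFro {n m : ℕ} (r : ℕ) (M : Matrix (Fin n) (Fin m) ℝ) : ℝ :=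
  Real.sqrt (∑ i ∈ Finset.range r, sv M i ^ 2)

/-- Dual norm with respect to the trace inner product. -/
noncomputable def dualNorm {n m : ℕ} (ν : Matrix (Fin n) (Fin m) ℝ → ℝ)
    (M : Matrix (Fin n) (Fin m) ℝ) : ℝ :=
  sSup {c : ℝ | ∃ Y, ν Y ≤ 1 ∧ c = ip M Y}

/-- Low-rank inducing Frobenius norm `‖·‖_{F,r*}`, the dual of `‖·‖_{F,r}`. -/
noncomputable def lowRankFro {n m : ℕ} (r : ℕ) (M : Matrix (Fin n) (Fin m) ℝ) : ℝ :=
  dualNorm (truncFro r) M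

/-- Ky Fan `r`-norm: sum of the `r` largest singular values. -/
noncomputable def kyFan {n m : ℕ} (r : ℕ) (M : Matrix (Fin n) (Fin m) ℝ) : ℝ :=
  ∑ i ∈ Finset.range r, sv M i

/-- Nuclear norm: sum of all singular values. -/
noncomputable def nuclear {n m : ℕ} (M : Matrix (Fin n) (Fin m) ℝ) : ℝ :=
  ∑ i ∈ Finset.range (min n m), sv M i

namespace TruncAux

variable {n m r : ℕ}

lemma hTM (M : Matrix (Fin n) (Fin m) ℝ) : (Mᵀ * M).IsHermitian := by
  rw [← Matrix.conjTranspose_eq_transpose_of_trivial]; exact Matrix.isHermitian_conjTranspose_mul_self M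

/-- eigenvalues of `Mᵀ M` -/
noncomputable def lam (M : Matrix (Fin n) (Fin m) ℝ) : Fin m → ℝ :=
  (hTM M).eigenvalues

lemma lam_nonneg (M : Matrix (Fin n) (Fin m) ℝ) (j : Fin m) : 0 ≤ lam M j := by
  have hp : (Mᵀ * M).PosSemidef := by
    rw [← Matrix.conjTranspose_eq_transpose_of_trivial]; exact Matrix.posSemidef_conjTranspose_mul_self M
  exact hp.eigenvalues_nonneg j

/-- the sorted list of singular values -/
noncomputable def svL (M : Matrix (Fin n) (Fin m) ℝ) : List ℝ :=
  (List.ofFn fun j : Fin m => Real.sqrt (lam M j)).mergeSort (fun a b => decide (a ≥ b))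

lemma sv_eq (M : Matrix (Fin n) (Fin m) ℝ) (i : ℕ) : sv M i = (svL M).getD i 0 := rfl

lemma svL_length (M : Matrix (Fin n) (Fin m) ℝ) : (svL M).length = m := by
  simp [svL]

lemma svL_nonneg (M : Matrix (Fin n) (Fin m) ℝ) {x : ℝ} (hx : x ∈ svL M) : 0 ≤ x := by
  have := (List.mergeSort_perm (List.ofFn fun j : Fin m => Real.sqrt (lam M j))
    (fun a b => decide (a ≥ b))).subset hx
  obtain ⟨j, hj⟩ := List.mem_ofFn.mp this
  exact hj ▸ Real.sqrt_nonneg _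

lemma svL_sorted (M : Matrix (Fin n) (Fin m) ℝ) : (svL M).Pairwise (· ≥ ·) := by
  have h := List.pairwise_mergeSort (le := fun a b : ℝ => decide (a ≥ b))
    (fun a b c hab hbc => by
      simp only [decide_eq_true_eq] at *; exact le_trans hbc hab)
    (fun a b => by simpa using le_total b a)
    (List.ofFn fun j : Fin m => Real.sqrt (lam M j))
  exact h.imp (fun hab => by simpa using hab)

lemma sv_nonneg (M : Matrix (Fin n) (Fin m) ℝ) (i : ℕ) : 0 ≤ sv M i := by
  rw [sv_eq]
  rcases lt_or_ge i (svL M).length with h | h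
  · rw [List.getD_eq_getElem _ _ h]
    exact svL_nonneg M (List.getElem_mem h)
  · rw [List.getD_eq_default _ _ h]

lemma sv_antitone (M : Matrix (Fin n) (Fin m) ℝ) {i j : ℕ} (hij : i ≤ j) :
    sv M j ≤ sv M i := by
  rcases lt_or_ge j (svL M).length with h | h
  · have hi : i < (svL M).length := lt_of_le_of_lt hij h
    rcases eq_or_lt_of_le hij with rfl | hlt
    · exact le_rfl
    · rw [sv_eq, sv_eq, List.getD_eq_getElem _ _ h, List.getD_eq_getElem _ _ hi]
      exact List.pairwise_iff_getElem.mp (svL_sorted M) i j hi h hlt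
  · rw [sv_eq M j, List.getD_eq_default _ _ h]
    exact sv_nonneg M i

/-- the permutation sorting the square roots of eigenvalues in decreasing order -/
noncomputable def pe (M : Matrix (Fin n) (Fin m) ℝ) : Equiv.Perm (Fin m) :=
  (Fin.revPerm).trans (Tuple.sort (fun j => Real.sqrt (lam M j)))

lemma svL_eq_ofFn (M : Matrix (Fin n) (Fin m) ℝ) :
    svL M = List.ofFn (fun i => Real.sqrt (lam M (pe M i))) := by
  set g : Fin m → ℝ := fun j => Real.sqrt (lam M j) with hg
  have hanti : ∀ i j : Fin m, i ≤ j → g (pe M j) ≤ g (pe M i) := by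
    intro i j hij
    have : (Fin.rev j) ≤ Fin.rev i := Fin.rev_le_rev.mpr hij
    exact Tuple.monotone_sort g this
  have hperm1 : (svL M).Perm (List.ofFn g) := List.mergeSort_perm _ _
  have hperm2 : (List.ofFn g).Perm (List.ofFn (fun i => g (pe M i))) := by
    rw [List.ofFn_eq_map, List.ofFn_eq_map]
    have hp : (List.finRange m).Perm ((List.finRange m).map (pe M)) := by
      apply List.perm_of_nodup_nodup_toFinset_eq (List.nodup_finRange m)
      · exact (List.nodup_finRange m).map (pe M).injective
      · ext x
        simp only [List.toFinset_finRange, Finset.mem_univ, List.mem_toFinset,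
          List.mem_map, List.mem_finRange, true_and, true_iff]
        exact ⟨(pe M).symm x, (pe M).apply_symm_apply x⟩
    simpa [List.map_map, Function.comp_def] using hp.map g
  have hsorted2 : (List.ofFn (fun i => g (pe M i))).Pairwise (· ≥ ·) := by
    rw [List.pairwise_ofFn]
    intro i j hij
    exact hanti i j (le_of_lt hij)
  exact List.Perm.eq_of_pairwise (fun a b _ _ h1 h2 => le_antisymm h2 h1) (svL_sorted M) hsorted2
    (hperm1.trans hperm2)

lemma sv_sq_eq (M : Matrix (Fin n) (Fin m) ℝ) (k : Fin m) :
    sv M (k : ℕ) ^ 2 = lam M (pe M k) := by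
  have hlen : ((k : ℕ)) < (svL M).length := by rw [svL_length]; exact k.isLt
  rw [sv_eq, List.getD_eq_getElem _ _ hlen]
  have := svL_eq_ofFn M
  rw [List.getElem_of_eq this]
  simp [Real.sq_sqrt (lam_nonneg M _)]

/-- sum of squared entries -/
def P2 {a b : ℕ} (X : Matrix (Fin a) (Fin b) ℝ) : ℝ := ∑ i, ∑ j, X i j ^ 2

lemma P2_nonneg {a b : ℕ} (X : Matrix (Fin a) (Fin b) ℝ) : 0 ≤ P2 X :=
  Finset.sum_nonneg fun _ _ => Finset.sum_nonneg fun _ _ => sq_nonneg _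

lemma P2_eq_trace {a b : ℕ} (X : Matrix (Fin a) (Fin b) ℝ) :
    P2 X = Matrix.trace (Xᵀ * X) := by
  simp only [P2, Matrix.trace, Matrix.diag_apply, Matrix.mul_apply,
    Matrix.transpose_apply, sq]
  exact Finset.sum_comm

lemma trace_transpose_diag {a b : ℕ} (d : Fin a → ℝ) (X : Matrix (Fin a) (Fin b) ℝ) :
    Matrix.trace (Xᵀ * (Matrix.diagonal d * X)) = ∑ k, d k * ∑ q, X k q ^ 2 := by
  set Y := Matrix.diagonal d * X with hY
  have hYa : ∀ k q, Y k q = d k * X k q := fun k q => by rw [hY, Matrix.diagonal_mul]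
  simp only [Matrix.trace, Matrix.diag_apply, Matrix.mul_apply, Matrix.transpose_apply]
  rw [Finset.sum_comm]
  apply Finset.sum_congr rfl
  intro k _
  rw [Finset.mul_sum]
  apply Finset.sum_congr rfl
  intro q _
  rw [hYa]
  ring

section Spectral

variable (M : Matrix (Fin n) (Fin m) ℝ)

noncomputable def Umat : Matrix (Fin m) (Fin m) ℝ :=
  ((hTM M).eigenvectorUnitary : Matrix (Fin m) (Fin m) ℝ)

lemma Umat_star_mul : star (Umat M) * Umat M = 1 :=
  Unitary.star_mul_self_of_mem (hTM M).eigenvectorUnitary.2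

lemma Umat_mul_star : Umat M * star (Umat M) = 1 :=
  Unitary.mul_star_self_of_mem (hTM M).eigenvectorUnitary.2

lemma spectral : Mᵀ * M = Umat M * Matrix.diagonal (lam M) * star (Umat M) := by
  have h := (hTM M).spectral_theorem
  simpa [Umat, lam, RCLike.ofReal_real_eq_id] using h

lemma P2_eq_sum_lam (M : Matrix (Fin n) (Fin m) ℝ) : P2 M = ∑ j, lam M j := by
  rw [P2_eq_trace, spectral M, Matrix.trace_mul_comm]
  rw [← Matrix.mul_assoc, Umat_star_mul M, Matrix.one_mul]
  simp [Matrix.trace, Matrix.diag_apply, Matrix.diagonal_apply_eq]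

end Spectral

/-- majorization step -/
lemma maj {mm rr : ℕ} (hrm : rr ≤ mm) (t : ℕ → ℝ) (ht : ∀ i j : ℕ, i ≤ j → t j ≤ t i)
    (c : ℕ → ℝ) (hc0 : ∀ i, 0 ≤ c i) (hc1 : ∀ i, c i ≤ 1)
    (hcs : ∑ i ∈ Finset.range mm, c i = rr) :
    ∑ i ∈ Finset.range mm, t i * c i ≤ ∑ i ∈ Finset.range rr, t i := by
  set θ := t rr with hθ
  have hsplit : ∑ i ∈ Finset.range mm, t i * c i
      = ∑ i ∈ Finset.range rr, t i * c i + ∑ i ∈ Finset.Ico rr mm, t i * c i := by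
    rw [Finset.range_eq_Ico, ← Finset.sum_Ico_consecutive (fun i => t i * c i)
      (Nat.zero_le rr) hrm, ← Finset.range_eq_Ico]
  have hcsplit : ∑ i ∈ Finset.range rr, c i + ∑ i ∈ Finset.Ico rr mm, c i
      = ∑ i ∈ Finset.range mm, c i := by
    exact Finset.sum_range_add_sum_Ico c hrm
  have h1 : ∑ i ∈ Finset.range rr, t i * c i
      ≤ ∑ i ∈ Finset.range rr, t i + θ * (∑ i ∈ Finset.range rr, c i) - θ * rr := by
    have : ∑ i ∈ Finset.range rr, t i * c i
        ≤ ∑ i ∈ Finset.range rr, (t i + θ * c i - θ) := by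
      apply Finset.sum_le_sum
      intro i hi
      have hi' : i ≤ rr := le_of_lt (Finset.mem_range.mp hi)
      have hti : θ ≤ t i := ht i rr hi'
      nlinarith [hc1 i, hc0 i]
    calc ∑ i ∈ Finset.range rr, t i * c i
        ≤ ∑ i ∈ Finset.range rr, (t i + θ * c i - θ) := this
      _ = ∑ i ∈ Finset.range rr, t i + θ * (∑ i ∈ Finset.range rr, c i) - θ * rr := by
          rw [Finset.sum_sub_distrib, Finset.sum_add_distrib, ← Finset.mul_sum,
            Finset.sum_const, Finset.card_range, nsmul_eq_mul, mul_comm (rr : ℝ) θ]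
  have h2 : ∑ i ∈ Finset.Ico rr mm, t i * c i ≤ θ * ∑ i ∈ Finset.Ico rr mm, c i := by
    rw [Finset.mul_sum]
    apply Finset.sum_le_sum
    intro i hi
    have : rr ≤ i := (Finset.mem_Ico.mp hi).1
    exact mul_le_mul_of_nonneg_right (ht rr i this) (hc0 i)
  have hkey : θ * (∑ i ∈ Finset.range rr, c i) + θ * (∑ i ∈ Finset.Ico rr mm, c i)
      = θ * rr := by rw [← mul_add, hcsplit, hcs]
  linarith [hsplit, h1, h2, hkey]

/-- Key upper bound: for any `V` with orthonormal columns,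
`‖M V‖_F² ≤ Σ_{i<r} σᵢ(M)²`. -/
lemma key1 (M : Matrix (Fin n) (Fin m) ℝ) (hrm : r ≤ m)
    (V : Matrix (Fin m) (Fin r) ℝ) (hV : Vᵀ * V = 1) :
    P2 (M * V) ≤ ∑ i ∈ Finset.range r, sv M i ^ 2 := by
  classical
  set U := Umat M with hU
  set W := star U * V with hW
  have hstarU : star U = Uᵀ := by
    ext i j; simp [Matrix.star_apply]
  have hWW : Wᵀ * W = 1 := by
    have : Wᵀ = Vᵀ * U := by
      rw [hW, Matrix.transpose_mul, hstarU, Matrix.transpose_transpose]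
    rw [this, hW, hstarU]
    calc Vᵀ * U * (Uᵀ * V) = Vᵀ * (U * Uᵀ) * V := by
          simp only [Matrix.mul_assoc]
      _ = 1 := by rw [← hstarU, Umat_mul_star M, Matrix.mul_one, hV]
  set c : Fin m → ℝ := fun k => ∑ q, W k q ^ 2 with hc
  -- step 1 : P2 (M*V) = Σ_k lam k * c k
  have step1 : P2 (M * V) = ∑ k, lam M k * c k := by
    rw [P2_eq_trace, Matrix.transpose_mul, Matrix.mul_assoc, ← Matrix.mul_assoc Mᵀ M V,
      spectral M]
    have : Vᵀ * (Umat M * Matrix.diagonal (lam M) * star (Umat M) * V)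
        = Wᵀ * (Matrix.diagonal (lam M) * W) := by
      have hWT : Wᵀ = Vᵀ * U := by
        rw [hW, Matrix.transpose_mul, hstarU, Matrix.transpose_transpose]
      rw [hWT, hW, hU]
      simp only [Matrix.mul_assoc]
    rw [this, trace_transpose_diag]
  -- step 2 : c k ≤ 1
  have step2 : ∀ k, c k ≤ 1 := by
    intro k
    set P : Matrix (Fin m) (Fin m) ℝ := 1 - W * Wᵀ with hP
    have hPP : P * P = P := by
      rw [hP]
      have : W * Wᵀ * (W * Wᵀ) = W * Wᵀ := by
        calc W * Wᵀ * (W * Wᵀ) = W * (Wᵀ * W) * Wᵀ := by simp only [Matrix.mul_assoc]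
          _ = W * Wᵀ := by rw [hWW, Matrix.mul_one]
      rw [Matrix.sub_mul, Matrix.one_mul, Matrix.mul_sub, Matrix.mul_one, this]
      abel
    have hPT : Pᵀ = P := by
      rw [hP]
      simp [Matrix.transpose_sub, Matrix.transpose_mul]
    have hdiag : P k k = ∑ i, (P i k) ^ 2 := by
      have h3 : P k k = (Pᵀ * P) k k := by rw [hPT, hPP]
      rw [h3]
      simp only [Matrix.mul_apply, Matrix.transpose_apply]
      apply Finset.sum_congr rfl
      intro j _
      ring
    have hPkk : 0 ≤ P k k := hdiag ▸ Finset.sum_nonneg fun _ _ => sq_nonneg _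
    have hWWd : (W * Wᵀ) k k = c k := by
      simp only [Matrix.mul_apply, Matrix.transpose_apply, hc]
      apply Finset.sum_congr rfl
      intro q _; ring
    have : P k k = 1 - c k := by
      rw [hP]
      simp [Matrix.sub_apply, Matrix.one_apply_eq, hWWd]
    linarith [hPkk, this ▸ hPkk]
  -- step 3 : Σ c = r
  have step3 : ∑ k, c k = (r : ℝ) := by
    have : ∑ k, c k = ∑ q : Fin r, (Wᵀ * W) q q := by
      simp only [hc, Matrix.mul_apply, Matrix.transpose_apply]
      rw [Finset.sum_comm]
      apply Finset.sum_congr rfl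
      intro q _
      apply Finset.sum_congr rfl
      intro k _; ring
    rw [this, hWW]
    simp [Matrix.one_apply_eq]
  have hc0 : ∀ k, 0 ≤ c k := fun k => Finset.sum_nonneg fun _ _ => sq_nonneg _
  -- reindex by the sorting permutation
  have step4 : ∑ k, lam M k * c k = ∑ k : Fin m, sv M (k : ℕ) ^ 2 * c (pe M k) := by
    rw [← Equiv.sum_comp (pe M) (fun k => lam M k * c k)]
    apply Finset.sum_congr rfl
    intro k _
    rw [sv_sq_eq]
  set c' : ℕ → ℝ := fun i => if h : i < m then c (pe M ⟨i, h⟩) else 0 with hc'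
  have step5 : ∑ k : Fin m, sv M (k : ℕ) ^ 2 * c (pe M k)
      = ∑ i ∈ Finset.range m, sv M i ^ 2 * c' i := by
    rw [← Fin.sum_univ_eq_sum_range (fun i => sv M i ^ 2 * c' i) m]
    apply Finset.sum_congr rfl
    intro k _
    congr 1
    rw [hc']
    simp only [k.isLt, dif_pos, Fin.eta]
  rw [step1, step4, step5]
  apply maj hrm
  · intro i j hij
    have h1 := sv_antitone M hij
    have h2 := sv_nonneg M j
    nlinarith
  · intro i
    by_cases h : i < m
    · simp only [hc', dif_pos h]; exact hc0 _
    · simp only [hc', dif_neg h]; exact le_rfl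
  · intro i
    by_cases h : i < m
    · simp only [hc', dif_pos h]; exact step2 _
    · simp only [hc', dif_neg h]; exact zero_le_one
  · rw [← Fin.sum_univ_eq_sum_range c' m]
    rw [← step3, ← Equiv.sum_comp (pe M) c]
    apply Finset.sum_congr rfl
    intro k _
    rw [hc']
    simp only [k.isLt, dif_pos, Fin.eta]

/-- Key attainment: there is a `V` with orthonormal columns with
`‖M V‖_F² = Σ_{i<r} σᵢ(M)²`. -/
lemma key2 (M : Matrix (Fin n) (Fin m) ℝ) (hrm : r ≤ m) :
    ∃ V : Matrix (Fin m) (Fin r) ℝ, Vᵀ * V = 1 ∧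
      P2 (M * V) = ∑ i ∈ Finset.range r, sv M i ^ 2 := by
  classical
  set emb : Fin r → Fin m := fun q => pe M (Fin.castLE hrm q) with hemb
  have hinj : Function.Injective emb := by
    intro a b hab
    have := (pe M).injective hab
    exact Fin.castLE_injective hrm this
  set E : Matrix (Fin m) (Fin r) ℝ := Matrix.of fun j q => if j = emb q then 1 else 0 with hE
  set U := Umat M with hU
  have hstarU : star U = Uᵀ := by
    ext i j; simp [Matrix.star_apply]
  refine ⟨U * E, ?_, ?_⟩
  · rw [Matrix.transpose_mul]
    calc Eᵀ * Uᵀ * (U * E) = Eᵀ * (Uᵀ * U) * E := by simp only [Matrix.mul_assoc]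
      _ = Eᵀ * E := by rw [← hstarU, Umat_star_mul M, Matrix.mul_one]
      _ = 1 := by
          ext q q'
          simp only [Matrix.mul_apply, Matrix.transpose_apply, hE, Matrix.of_apply]
          rw [Finset.sum_congr rfl (fun j _ => by
            rw [show ((if j = emb q then (1:ℝ) else 0) * (if j = emb q' then 1 else 0))
              = if j = emb q then (if j = emb q' then (1:ℝ) else 0) else 0 from by
                split <;> simp])]
          rw [Finset.sum_ite_eq' Finset.univ (emb q)
            (fun j => if j = emb q' then (1:ℝ) else 0)]
          simp only [Finset.mem_univ, if_true]
          by_cases h : q = q'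
          · subst h; simp
          · have : emb q ≠ emb q' := fun hc => h (hinj hc)
            simp [Matrix.one_apply, h, this]
  · rw [P2_eq_trace, Matrix.transpose_mul, Matrix.transpose_mul, Matrix.mul_assoc,
      ← Matrix.mul_assoc Mᵀ M (U * E), spectral M]
    have hmid : Eᵀ * Uᵀ * (Umat M * Matrix.diagonal (lam M) * star (Umat M) * (U * E))
        = Eᵀ * (Matrix.diagonal (lam M) * E) := by
      rw [← hU, hstarU]
      calc Eᵀ * Uᵀ * (U * Matrix.diagonal (lam M) * Uᵀ * (U * E))
          = Eᵀ * (Uᵀ * U) * Matrix.diagonal (lam M) * (Uᵀ * U) * E := by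
            simp only [Matrix.mul_assoc]
        _ = Eᵀ * (Matrix.diagonal (lam M) * E) := by
            rw [← hstarU, Umat_star_mul M]
            simp only [Matrix.mul_one, Matrix.one_mul, Matrix.mul_assoc]
    rw [hmid, trace_transpose_diag]
    have hterm : ∀ j, lam M j * (∑ q, E j q ^ 2)
        = ∑ q, (if j = emb q then lam M j else 0) := by
      intro j
      rw [Finset.mul_sum]
      apply Finset.sum_congr rfl
      intro q _
      rw [hE]
      simp only [Matrix.of_apply]
      split <;> simp
    rw [Finset.sum_congr rfl (fun j _ => hterm j), Finset.sum_comm]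
    rw [Finset.sum_congr rfl (fun q _ => Finset.sum_ite_eq' Finset.univ (emb q) (lam M))]
    simp only [Finset.mem_univ, if_true]
    rw [← Fin.sum_univ_eq_sum_range (fun i => sv M i ^ 2) r]
    apply Finset.sum_congr rfl
    intro q _
    rw [hemb]
    have : ((Fin.castLE hrm q : Fin m) : ℕ) = (q : ℕ) := rfl
    rw [← this, sv_sq_eq M (Fin.castLE hrm q)]

/-- Euclidean triangle inequality for the entrywise ℓ² norm. -/
lemma sqrtP2_add_le {a b : ℕ} (X Y : Matrix (Fin a) (Fin b) ℝ) :
    Real.sqrt (P2 (X + Y)) ≤ Real.sqrt (P2 X) + Real.sqrt (P2 Y) := by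
  classical
  set f : Matrix (Fin a) (Fin b) ℝ → EuclideanSpace ℝ (Fin a × Fin b) :=
    fun Z => (WithLp.equiv 2 _).symm (fun p : Fin a × Fin b => Z p.1 p.2) with hf
  have hnorm : ∀ Z : Matrix (Fin a) (Fin b) ℝ, ‖f Z‖ = Real.sqrt (P2 Z) := by
    intro Z
    rw [EuclideanSpace.norm_eq]
    congr 1
    rw [Fintype.sum_prod_type]
    apply Finset.sum_congr rfl
    intro i _
    apply Finset.sum_congr rfl
    intro j _
    simp [hf, Real.norm_eq_abs, sq_abs, WithLp.equiv_symm_apply]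
  have hadd : f (X + Y) = f X + f Y := by
    rw [hf]
    simp only
    rw [show (fun p : Fin a × Fin b => (X + Y) p.1 p.2)
      = (fun p : Fin a × Fin b => X p.1 p.2) + (fun p : Fin a × Fin b => Y p.1 p.2) from rfl]
    exact rfl
  calc Real.sqrt (P2 (X + Y)) = ‖f (X + Y)‖ := (hnorm _).symm
    _ = ‖f X + f Y‖ := by rw [hadd]
    _ ≤ ‖f X‖ + ‖f Y‖ := norm_add_le _ _
    _ = Real.sqrt (P2 X) + Real.sqrt (P2 Y) := by rw [hnorm, hnorm]

lemma P2_smul {a b : ℕ} (t : ℝ) (X : Matrix (Fin a) (Fin b) ℝ) :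
    P2 (t • X) = t ^ 2 * P2 X := by
  simp only [P2, Matrix.smul_apply, smul_eq_mul, mul_pow, Finset.mul_sum]

lemma truncFro_le_of_key (M : Matrix (Fin n) (Fin m) ℝ) (hrm : r ≤ m)
    (V : Matrix (Fin m) (Fin r) ℝ) (hV : Vᵀ * V = 1) :
    Real.sqrt (P2 (M * V)) ≤ truncFro r M := by
  rw [truncFro]
  exact Real.sqrt_le_sqrt (key1 M hrm V hV)

end TruncAux

open TruncAux in
/-- the truncated Frobenius function `Y ↦ sqrt (Σ_{i=1}^r σᵢ(Y)²)` is a norm. -/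
theorem truncFro_is_norm {n m r : ℕ} (hr1 : 1 ≤ r) (hr2 : r ≤ min n m) :
    (∀ M : Matrix (Fin n) (Fin m) ℝ, 0 ≤ truncFro r M) ∧
    (∀ M : Matrix (Fin n) (Fin m) ℝ, truncFro r M = 0 ↔ M = 0) ∧
    (∀ (a : ℝ) (M : Matrix (Fin n) (Fin m) ℝ), truncFro r (a • M) = |a| * truncFro r M) ∧
    (∀ M N : Matrix (Fin n) (Fin m) ℝ, truncFro r (M + N) ≤ truncFro r M + truncFro r N) := by
  have hrm : r ≤ m := le_trans hr2 (min_le_right n m)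
  -- general formula: truncFro via key2
  have hform : ∀ M : Matrix (Fin n) (Fin m) ℝ,
      ∃ V : Matrix (Fin m) (Fin r) ℝ, Vᵀ * V = 1 ∧
        truncFro r M = Real.sqrt (P2 (M * V)) := by
    intro M
    obtain ⟨V, hV, hP⟩ := key2 M hrm
    exact ⟨V, hV, by rw [truncFro, hP]⟩
  have hnonneg : ∀ M : Matrix (Fin n) (Fin m) ℝ, 0 ≤ truncFro r M :=
    fun M => Real.sqrt_nonneg _
  -- homogeneity (≤ direction)
  have hsmul_le : ∀ (a : ℝ) (M : Matrix (Fin n) (Fin m) ℝ),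
      truncFro r (a • M) ≤ |a| * truncFro r M := by
    intro a M
    obtain ⟨V, hV, hF⟩ := hform (a • M)
    rw [hF, Matrix.smul_mul, P2_smul, Real.sqrt_mul (sq_nonneg a), Real.sqrt_sq_eq_abs]
    exact mul_le_mul_of_nonneg_left (truncFro_le_of_key M hrm V hV) (abs_nonneg a)
  have hzero : truncFro r (0 : Matrix (Fin n) (Fin m) ℝ) = 0 := by
    have h := hsmul_le 0 0
    simp only [zero_smul, abs_zero, zero_mul] at h
    exact le_antisymm h (hnonneg 0)
  have hsmul : ∀ (a : ℝ) (M : Matrix (Fin n) (Fin m) ℝ),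
      truncFro r (a • M) = |a| * truncFro r M := by
    intro a M
    rcases eq_or_ne a 0 with rfl | ha
    · simp [hzero]
    · refine le_antisymm (hsmul_le a M) ?_
      have h := hsmul_le a⁻¹ (a • M)
      rw [smul_smul, inv_mul_cancel₀ ha, one_smul, abs_inv] at h
      have habs : 0 < |a| := abs_pos.mpr ha
      calc |a| * truncFro r M ≤ |a| * (|a|⁻¹ * truncFro r (a • M)) :=
            mul_le_mul_of_nonneg_left h (le_of_lt habs)
        _ = truncFro r (a • M) := by field_simp
  refine ⟨hnonneg, ?_, hsmul, ?_⟩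
  · -- definiteness
    intro M
    constructor
    · intro h
      -- sum of squares of top-r singular values is zero
      have hS : ∑ i ∈ Finset.range r, sv M i ^ 2 = 0 := by
        have h0 : 0 ≤ ∑ i ∈ Finset.range r, sv M i ^ 2 :=
          Finset.sum_nonneg fun _ _ => sq_nonneg _
        have := Real.sqrt_eq_zero h0 |>.mp h
        exact this
      have hall : ∀ i ∈ Finset.range r, sv M i ^ 2 = 0 := by
        intro i hi
        exact (Finset.sum_eq_zero_iff_of_nonneg fun _ _ => sq_nonneg _).mp hS i hi
      have hsv0 : sv M 0 = 0 :=
        pow_eq_zero_iff two_ne_zero |>.mp (hall 0 (Finset.mem_range.mpr hr1))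
      have hsv : ∀ i : ℕ, sv M i = 0 := fun i =>
        le_antisymm (hsv0 ▸ sv_antitone M (Nat.zero_le i)) (sv_nonneg M i)
      have hP2 : P2 M = 0 := by
        rw [P2_eq_sum_lam, ← Equiv.sum_comp (pe M) (lam M)]
        apply Finset.sum_eq_zero
        intro k _
        rw [← sv_sq_eq, hsv]
        ring
      have hprod : ∑ p : Fin n × Fin m, M p.1 p.2 ^ 2 = 0 := by
        rw [Fintype.sum_prod_type]
        exact hP2
      ext i j
      have := (Finset.sum_eq_zero_iff_of_nonneg fun _ _ => sq_nonneg _).mp hprod (i, j)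
        (Finset.mem_univ _)
      simpa using pow_eq_zero_iff two_ne_zero |>.mp this
    · intro h
      subst h
      exact hzero
  · -- triangle
    intro M N
    obtain ⟨V, hV, hF⟩ := hform (M + N)
    rw [hF, Matrix.add_mul]
    calc Real.sqrt (P2 (M * V + N * V))
        ≤ Real.sqrt (P2 (M * V)) + Real.sqrt (P2 (N * V)) := sqrtP2_add_le _ _
      _ ≤ truncFro r M + truncFro r N :=
          add_le_add (truncFro_le_of_key M hrm V hV) (truncFro_le_of_key N hrm V hV)
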